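/- Let α > 0, C > 0 and let π : ℝ → [0,∞) be measurable with π = 0 on (−∞,0] and lim_{x→∞} π(x)e^{αx} = C. Let μ be a nonzero finite Borel measure on ℝ with μ((−∞,0]) = 0 and ∫_{(0,∞)} z dμ(z) < ∞. Then liminf_{x→∞} (1/π(x)) ∫_0^x μ((x−z,∞)) π(z) dz > ∫_{(0,∞)} z dμ(z); equivalently, the drift coefficient φ(x) = −(1/π(x)) ∫_0^x μ((x−z,∞)) π(z) dz satisfies limsup_{x→∞} φ(x) < −∫_{(0,∞)} z dμ(z). -/

import Mathlib

open MeasureTheory Set Filter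

/-- the key drift condition: the asymptotic lower bound of
`(μ̄ₛ*π)(x)/π(x)` strictly exceeds the mean jump size `∫_{(0,∞)} z dμ(z)`;
equivalently `limsup φ < −∫ z dμ` for the drift coefficient `φ = −(μ̄ₛ*π)/π`. -/
theorem liminf_tail_convolution_ratio_gt_mean_jump
    (α C : ℝ) (hα : 0 < α) (hC : 0 < C)
    (π : ℝ → ℝ) (hπ_meas : Measurable π) (hπ_nonneg : ∀ x, 0 ≤ π x)
    (hπ_zero : ∀ x ≤ 0, π x = 0)
    (hlim : Tendsto (fun x => π x * Real.exp (α * x)) atTop (nhds C))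
    (μ : Measure ℝ) [IsFiniteMeasure μ] (hμne : μ ≠ 0) (hμ : μ (Iic 0) = 0)
    (hmom : ∫⁻ z in Ioi 0, ENNReal.ofReal z ∂μ < ⊤) :
    (∫⁻ z in Ioi 0, ENNReal.ofReal z ∂μ)
      < Filter.liminf
          (fun x => (∫⁻ z in Ioo 0 x, μ (Ioi (x - z)) * ENNReal.ofReal (π z))
            / ENNReal.ofReal (π x)) atTop := by
  set I := ∫⁻ z in Ioi 0, ENNReal.ofReal z ∂μ with hIdef
  -- μ is concentrated on (0, ∞)
  have hres : μ.restrict (Ioi 0) = μ := by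
    apply Measure.restrict_eq_self_of_ae_mem
    rw [Filter.eventually_iff, mem_ae_iff]
    convert hμ using 2
    ext y; simp [mem_Iic, not_lt]
  have hμmeas : Measurable (fun u : ℝ => μ (Ioi u)) := by
    have : Antitone (fun u : ℝ => μ (Ioi u)) := fun a b hab => measure_mono (Ioi_subset_Ioi hab)
    exact this.measurable
  -- layer cake representation of the first moment
  have hlayer : I = ∫⁻ t in Ioi (0:ℝ), μ (Ioi t) := by
    have hnn : (0 : ℝ → ℝ) ≤ᶠ[ae μ] fun z => z := by
      rw [Filter.EventuallyLE, Filter.eventually_iff, mem_ae_iff]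
      apply measure_mono_null _ hμ
      intro y hy
      simp only [mem_compl_iff, mem_setOf_eq, not_le, Pi.zero_apply, mem_Iic] at hy ⊢
      exact le_of_lt hy
    rw [hIdef, hres, lintegral_eq_lintegral_meas_lt μ (f := fun z => z) hnn
      measurable_id.aemeasurable]
    simp only [Ioi, mem_setOf_eq]
  -- a point of positive tail mass
  obtain ⟨t0, ht0, hm⟩ : ∃ t0 : ℝ, 0 < t0 ∧ 0 < μ (Ioi t0) := by
    by_contra h
    push_neg at h
    have hz : ∀ t0 : ℝ, 0 < t0 → μ (Ioi t0) = 0 := fun t ht => le_antisymm (h t ht) zero_le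
    have hU : Ioi (0:ℝ) = ⋃ n : ℕ, Ioi ((n:ℝ)+1)⁻¹ := by
      ext y; simp only [mem_iUnion, mem_Ioi]
      constructor
      · intro hy
        obtain ⟨n, hn⟩ := exists_nat_gt y⁻¹
        refine ⟨n, ?_⟩
        rw [inv_lt_comm₀ (by positivity) hy] at *
        exact lt_trans hn (by linarith)
      · intro ⟨n, hn⟩; exact lt_trans (by positivity) hn
    have h0 : μ (Ioi (0:ℝ)) = 0 := by
      rw [hU]
      exact measure_iUnion_null fun n => hz _ (by positivity)
    have : μ univ = 0 := by
      have := congrArg (fun ν : Measure ℝ => ν univ) hres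
      simpa [Measure.restrict_apply_univ, h0] using this.symm
    exact hμne (Measure.measure_univ_eq_zero.mp this)
  -- the exponentially tilted tail integral
  set g : ℝ → ENNReal := fun u => μ (Ioi u) * ENNReal.ofReal (Real.exp (α * u)) with hgdef
  have hgmeas : Measurable g :=
    hμmeas.mul (ENNReal.measurable_ofReal.comp (Real.measurable_exp.comp
      (measurable_const.mul measurable_id)))
  -- strict inequality against the full tilted integral
  have hJ : I < ∫⁻ u in Ioi (0:ℝ), g u := by
    set K := ∫⁻ u in Ioi (0:ℝ), μ (Ioi u) * ENNReal.ofReal (α * u) with hKdef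
    have hKpos : 0 < K := by
      have hsub : Ioo (t0/2) t0 ⊆ Ioi (0:ℝ) := fun y hy => lt_trans (by linarith) hy.1
      have hle : μ (Ioi t0) * ENNReal.ofReal (α * (t0/2)) * volume (Ioo (t0/2) t0) ≤ K := by
        calc μ (Ioi t0) * ENNReal.ofReal (α * (t0/2)) * volume (Ioo (t0/2) t0)
            = ∫⁻ _ in Ioo (t0/2) t0, μ (Ioi t0) * ENNReal.ofReal (α * (t0/2)) :=
              (setLIntegral_const _ _).symm
          _ ≤ ∫⁻ u in Ioo (t0/2) t0, μ (Ioi u) * ENNReal.ofReal (α * u) := by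
              apply setLIntegral_mono
                (hμmeas.mul (ENNReal.measurable_ofReal.comp
                  (measurable_const.mul measurable_id)))
              intro u hu
              apply mul_le_mul'
              · exact measure_mono (Ioi_subset_Ioi hu.2.le)
              · exact ENNReal.ofReal_le_ofReal (mul_le_mul_of_nonneg_left hu.1.le hα.le)
          _ ≤ K := lintegral_mono_set hsub
      refine lt_of_lt_of_le ?_ hle
      apply ENNReal.mul_pos
      · exact (ENNReal.mul_pos hm.ne' (by simp [ENNReal.ofReal_pos]; positivity)).ne'
      · simp only [Real.volume_Ioo, ne_eq, ENNReal.ofReal_eq_zero, not_le]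
        linarith
    have hadd : I + K ≤ ∫⁻ u in Ioi (0:ℝ), g u := by
      rw [hlayer, hKdef, ← lintegral_add_left hμmeas]
      apply setLIntegral_mono hgmeas
      intro u hu
      have h1 : (1 : ℝ) + α * u ≤ Real.exp (α * u) := by
        have := Real.add_one_le_exp (α * u); linarith
      calc μ (Ioi u) + μ (Ioi u) * ENNReal.ofReal (α * u)
          = μ (Ioi u) * (1 + ENNReal.ofReal (α * u)) := by ring
        _ = μ (Ioi u) * ENNReal.ofReal (1 + α * u) := by
            rw [ENNReal.ofReal_add (by norm_num) (mul_nonneg hα.le (le_of_lt hu)),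
              ENNReal.ofReal_one]
        _ ≤ g u := mul_le_mul' le_rfl (ENNReal.ofReal_le_ofReal h1)
    calc I < I + K := ENNReal.lt_add_right hmom.ne hKpos.ne'
      _ ≤ _ := hadd
  -- extract a finite truncation level T = n
  have hsup : ∫⁻ u in Ioi (0:ℝ), g u = ⨆ n : ℕ, ∫⁻ u in Ioo (0:ℝ) (n:ℝ), g u := by
    have hU : (Ioi (0:ℝ)) = ⋃ n : ℕ, Ioo 0 (n:ℝ) := by
      ext y; simp only [mem_iUnion, mem_Ioo, mem_Ioi]
      constructor
      · intro hy; obtain ⟨n, hn⟩ := exists_nat_gt y; exact ⟨n, hy, hn⟩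
      · rintro ⟨n, h', _⟩; exact h'
    rw [hU, setLIntegral_iUnion_of_directed]
    exact (monotone_nat_of_le_succ fun n =>
      Ioo_subset_Ioo_right (by exact_mod_cast n.le_succ)).directed_le
  obtain ⟨n, hn⟩ : ∃ n : ℕ, I < ∫⁻ u in Ioo (0:ℝ) (n:ℝ), g u := by
    rw [hsup] at hJ
    exact lt_iSup_iff.mp hJ
  set T : ℝ := (n : ℝ) with hTdef
  have hT0 : 0 ≤ T := Nat.cast_nonneg n
  set JT := ∫⁻ u in Ioo (0:ℝ) T, g u with hJTdef
  -- choose r < 1 with I < r · JT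
  obtain ⟨r, hr0, hr1, hrI⟩ : ∃ r : ℝ, 0 < r ∧ r < 1 ∧ I < ENNReal.ofReal r * JT := by
    by_cases hfin : JT = ⊤
    · refine ⟨1/2, by norm_num, by norm_num, ?_⟩
      rw [hfin, ENNReal.mul_top (by simp)]
      exact hmom
    · have h0 : JT ≠ 0 := (lt_of_le_of_lt zero_le hn).ne'
      have hJTpos : 0 < JT.toReal := ENNReal.toReal_pos h0 hfin
      set ρ := I.toReal / JT.toReal with hρdef
      have hρ1 : ρ < 1 := by
        rw [hρdef, div_lt_one hJTpos]
        exact (ENNReal.toReal_lt_toReal hmom.ne hfin).mpr hn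
      have hρ0 : 0 ≤ ρ := by positivity
      refine ⟨(ρ+1)/2, by linarith, by linarith, ?_⟩
      have hkey : I.toReal < ((ρ+1)/2) * JT.toReal := by
        have hI : ρ * JT.toReal = I.toReal := div_mul_cancel₀ _ hJTpos.ne'
        nlinarith
      calc I = ENNReal.ofReal I.toReal := (ENNReal.ofReal_toReal hmom.ne).symm
        _ < ENNReal.ofReal (((ρ+1)/2) * JT.toReal) := by
            exact (ENNReal.ofReal_lt_ofReal_iff_of_nonneg ENNReal.toReal_nonneg).mpr hkey
        _ = ENNReal.ofReal ((ρ+1)/2) * ENNReal.ofReal JT.toReal :=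
            ENNReal.ofReal_mul (by linarith)
        _ = ENNReal.ofReal ((ρ+1)/2) * JT := by rw [ENNReal.ofReal_toReal hfin]
  -- the distortion parameter δ with r(1+δ) = 1-δ
  set δ : ℝ := (1 - r)/(1 + r) with hδdef
  have hδ0 : 0 < δ := by rw [hδdef]; exact div_pos (by linarith) (by linarith)
  have hδ1 : δ < 1 := by
    rw [hδdef, div_lt_one (by linarith)]; linarith
  have hkeyδ : r * (C * (1 + δ)) = C * (1 - δ) := by
    rw [hδdef]; field_simp; ring
  -- eventual two-sided bounds on π y e^{αy}
  have h1 : ∀ᶠ y in atTop, C * (1 - δ) < π y * Real.exp (α * y) :=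
    hlim.eventually_const_lt (by nlinarith)
  have h2 : ∀ᶠ y in atTop, π y * Real.exp (α * y) < C * (1 + δ) :=
    hlim.eventually_lt_const (by nlinarith)
  obtain ⟨M, hM⟩ := eventually_atTop.mp (h1.and h2)
  -- the eventual lower bound on the ratio
  have hev : ∀ᶠ x in atTop, ENNReal.ofReal r * JT ≤
      (∫⁻ z in Ioo 0 x, μ (Ioi (x - z)) * ENNReal.ofReal (π z))
        / ENNReal.ofReal (π x) := by
    filter_upwards [eventually_ge_atTop (max M 0 + T + 1)] with x hx
    have hmax1 : M ≤ max M 0 := le_max_left _ _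
    have hmax2 : (0:ℝ) ≤ max M 0 := le_max_right _ _
    have hxM : M ≤ x := by linarith
    have hπx := hM x hxM
    have hπxpos : 0 < π x := by
      have he := Real.exp_pos (α * x)
      nlinarith [hπx.1]
    -- pointwise bound : r e^{αu} π x ≤ π (x-u) for 0 < u < T
    have hpt : ∀ u ∈ Ioo (0:ℝ) T, r * Real.exp (α * u) * π x ≤ π (x - u) := by
      intro u hu
      have hxuM : M ≤ x - u := by have h2u := hu.2; linarith
      have hπxu := hM (x - u) hxuM
      have hE : Real.exp (α * u) * Real.exp (α * (x - u)) = Real.exp (α * x) := by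
        rw [← Real.exp_add]; ring_nf
      have step : r * Real.exp (α * u) * π x * Real.exp (α * (x - u))
          ≤ π (x - u) * Real.exp (α * (x - u)) := by
        calc r * Real.exp (α * u) * π x * Real.exp (α * (x - u))
            = r * (π x * Real.exp (α * x)) := by rw [← hE]; ring
          _ ≤ r * (C * (1 + δ)) := mul_le_mul_of_nonneg_left hπx.2.le hr0.le
          _ = C * (1 - δ) := hkeyδ
          _ ≤ π (x - u) * Real.exp (α * (x - u)) := hπxu.1.le
      exact le_of_mul_le_mul_right step (Real.exp_pos _)
    -- change of variables and chaining of lower bounds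
    have hCOV : ∫⁻ z in Ioo (x - T) x, μ (Ioi (x - z)) * ENNReal.ofReal (π z)
        = ∫⁻ u in Ioo 0 T, μ (Ioi u) * ENNReal.ofReal (π (x - u)) := by
      have hmap : Measure.map (fun u : ℝ => x - u) volume = volume :=
        (MeasureTheory.Measure.measurePreserving_sub_left volume x).map_eq
      have hmble : Measurable (fun z : ℝ => μ (Ioi (x - z)) * ENNReal.ofReal (π z)) :=
        (hμmeas.comp (measurable_const.sub measurable_id)).mul
          (ENNReal.measurable_ofReal.comp hπ_meas)
      have h2' := setLIntegral_map (μ := volume) (g := fun u : ℝ => x - u)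
          (f := fun z : ℝ => μ (Ioi (x - z)) * ENNReal.ofReal (π z))
          (s := Ioo (x - T) x) measurableSet_Ioo hmble
          (measurable_const.sub measurable_id)
      rw [hmap] at h2'
      have hset : (fun u : ℝ => x - u) ⁻¹' (Ioo (x - T) x) = Ioo 0 T := by
        ext u
        simp only [mem_preimage, mem_Ioo]
        constructor
        · rintro ⟨ha, hb⟩; constructor <;> linarith
        · rintro ⟨ha, hb⟩; constructor <;> linarith
      rw [hset] at h2'
      rw [h2']
      apply lintegral_congr
      intro u
      congr 2
      · congr 1; ring
    have hlow : ENNReal.ofReal (r * π x) * JT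
        ≤ ∫⁻ z in Ioo 0 x, μ (Ioi (x - z)) * ENNReal.ofReal (π z) := by
      calc ENNReal.ofReal (r * π x) * JT
          = ∫⁻ u in Ioo (0:ℝ) T, ENNReal.ofReal (r * π x) * g u := by
            rw [lintegral_const_mul _ hgmeas]
        _ ≤ ∫⁻ u in Ioo (0:ℝ) T, μ (Ioi u) * ENNReal.ofReal (π (x - u)) := by
            apply setLIntegral_mono
              ((hμmeas).mul (ENNReal.measurable_ofReal.comp
                (hπ_meas.comp (measurable_const.sub measurable_id))))
            intro u hu
            show ENNReal.ofReal (r * π x) * (μ (Ioi u) * ENNReal.ofReal (Real.exp (α * u)))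
              ≤ μ (Ioi u) * ENNReal.ofReal (π (x - u))
            calc ENNReal.ofReal (r * π x) * (μ (Ioi u) * ENNReal.ofReal (Real.exp (α * u)))
                = μ (Ioi u) * (ENNReal.ofReal (r * π x) * ENNReal.ofReal (Real.exp (α * u))) := by
                  ring
              _ = μ (Ioi u) * ENNReal.ofReal (r * π x * Real.exp (α * u)) := by
                  rw [← ENNReal.ofReal_mul (by positivity)]
              _ ≤ μ (Ioi u) * ENNReal.ofReal (π (x - u)) := by
                  apply mul_le_mul' le_rfl
                  apply ENNReal.ofReal_le_ofReal
                  calc r * π x * Real.exp (α * u) = r * Real.exp (α * u) * π x := by ring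
                    _ ≤ π (x - u) := hpt u hu
        _ = ∫⁻ z in Ioo (x - T) x, μ (Ioi (x - z)) * ENNReal.ofReal (π z) := hCOV.symm
        _ ≤ ∫⁻ z in Ioo 0 x, μ (Ioi (x - z)) * ENNReal.ofReal (π z) := by
            apply lintegral_mono_set
            apply Ioo_subset_Ioo_left
            linarith
    rw [ENNReal.le_div_iff_mul_le (Or.inl (by simp [ENNReal.ofReal_pos, hπxpos]))
      (Or.inl ENNReal.ofReal_ne_top)]
    calc ENNReal.ofReal r * JT * ENNReal.ofReal (π x)
        = ENNReal.ofReal (r * π x) * JT := by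
          rw [ENNReal.ofReal_mul hr0.le]; ring
      _ ≤ _ := hlow
  exact lt_of_lt_of_le hrI (le_liminf_of_le (by isBoundedDefault) hev)
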